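/- Let $2 \leq a_1 \leq \cdots \leq a_r$ be integers. There exists a constant $C>0$ such that every $r$-uniform hypergraph $G$ with $n$ vertices and $m \geq C n^{r - 1/(a_1\cdots a_{r-1})}$ edges contains at least $\Omega(m^{a_1\cdots a_r} n^{a_1+\cdots+a_r - r\cdot a_1\cdots a_r})$ copies of the complete $r$-partite $r$-graph $K^{(r)}_{a_1,\ldots,a_r}$. -/

import Mathlib

open Real Finset

/-- `A : Fin r → Finset V` is a copy of the complete `r`-partite `r`-graph
`K^{(r)}_{a 0, …, a (r-1)}` in the `r`-uniform hypergraph `G`: the classes `A i`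
have sizes `a i`, are pairwise disjoint, and every `r`-set with exactly one vertex
in each class is an edge of `G`. -/
def IsCompleteMultipartiteCopy {V : Type*} [DecidableEq V] (G : Finset (Finset V))
    {r : ℕ} (a : Fin r → ℕ) (A : Fin r → Finset V) : Prop :=
  (∀ i, (A i).card = a i) ∧
  (∀ i j, i ≠ j → Disjoint (A i) (A j)) ∧
  (∀ f : Fin r → V, (∀ i, f i ∈ A i) → Finset.image f Finset.univ ∈ G)

set_option maxHeartbeats 400000

namespace Super

lemma cast_sub_ge (a b : ℕ) : (a:ℝ) - (b:ℝ) ≤ ((a - b : ℕ) : ℝ) := by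
  rcases le_total b a with h | h
  · rw [Nat.cast_sub h]
  · rw [Nat.sub_eq_zero_of_le h]
    have : (a:ℝ) ≤ (b:ℝ) := by exact_mod_cast h
    simp; linarith

lemma pow_le_choose (d k : ℕ) : ((d + 1 - k : ℕ) : ℝ) ^ k ≤ (k:ℝ)^k * (d.choose k : ℝ) := by
  have h1 : (d + 1 - k)^k ≤ k^k * d.choose k :=
    calc (d + 1 - k)^k ≤ d.descFactorial k := Nat.pow_sub_le_descFactorial d k
    _ = Nat.factorial k * d.choose k := Nat.descFactorial_eq_factorial_mul_choose d k
    _ ≤ k^k * d.choose k := Nat.mul_le_mul_right _ (Nat.factorial_le_pow k)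
  exact_mod_cast h1

variable {V : Type} [Fintype V] [DecidableEq V]

def mext (G : Finset (Finset V)) {r' : ℕ} (B : Fin r' → Finset V) : Finset V :=
  univ.filter fun v => ∀ g : Fin r' → V, (∀ i, g i ∈ B i) → insert v (Finset.image g Finset.univ) ∈ G

def mpre {r' : ℕ} (b : Fin r' → ℕ) : Finset (Fin r' → Finset V) :=
  univ.filter fun B => (∀ i, (B i).card = b i) ∧ ∀ i j, i ≠ j → Disjoint (B i) (B j)

def link (G : Finset (Finset V)) (v : V) : Finset (Finset V) :=
  (G.filter fun e => v ∈ e).image fun e => e.erase v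

lemma mem_mext_iff {G : Finset (Finset V)} {r' : ℕ} {B : Fin r' → Finset V} {v : V} :
    v ∈ mext G B ↔ ∀ g : Fin r' → V, (∀ i, g i ∈ B i) → insert v (Finset.image g Finset.univ) ∈ G := by
  simp [mext]

lemma mem_mpre_iff {r' : ℕ} {b : Fin r' → ℕ} {B : Fin r' → Finset V} :
    B ∈ mpre b ↔ (∀ i, (B i).card = b i) ∧ ∀ i j, i ≠ j → Disjoint (B i) (B j) := by
  simp [mpre]

lemma not_mem_of_mem_mext {G : Finset (Finset V)} {r' : ℕ} (hG : ∀ e ∈ G, e.card = r' + 1)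
    {B : Fin r' → Finset V} (hB : ∀ i, (B i).Nonempty) {v : V} (hv : v ∈ mext G B)
    (i : Fin r') : v ∉ B i := by
  intro hvB
  set g : Fin r' → V := fun j => if j = i then v else (hB j).choose with hgdef
  have hg : ∀ j, g j ∈ B j := by
    intro j
    by_cases h : j = i
    · subst h; simpa [hgdef] using hvB
    · simpa [hgdef, h] using (hB j).choose_spec
  have hmem : insert v (Finset.image g Finset.univ) ∈ G := mem_mext_iff.1 hv g hg
  have hvimg : v ∈ Finset.image g Finset.univ := by
    refine Finset.mem_image.2 ⟨i, Finset.mem_univ _, ?_⟩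
    simp [hgdef]
  have h1 : insert v (Finset.image g Finset.univ) = Finset.image g Finset.univ :=
    Finset.insert_eq_self.2 hvimg
  have h2 : (Finset.image g Finset.univ).card ≤ r' := by
    simpa using Finset.card_image_le (s := (Finset.univ : Finset (Fin r'))) (f := g)
  have h3 := hG _ hmem
  rw [h1] at h3
  omega

lemma copy_link_iff {G : Finset (Finset V)} {r' : ℕ} (hG : ∀ e ∈ G, e.card = r' + 1)
    (b : Fin r' → ℕ) (hb : ∀ i, 1 ≤ b i) (v : V) (B : Fin r' → Finset V) :
    (B ∈ mpre b ∧ v ∈ mext G B) ↔ IsCompleteMultipartiteCopy (link G v) b B := by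
  constructor
  · rintro ⟨hBpre, hvext⟩
    obtain ⟨hcard, hdisj⟩ := mem_mpre_iff.1 hBpre
    have hBne : ∀ i, (B i).Nonempty := fun i => Finset.card_pos.1 (by rw [hcard i]; exact hb i)
    refine ⟨hcard, hdisj, fun g hg => ?_⟩
    have hins : insert v (Finset.image g Finset.univ) ∈ G := mem_mext_iff.1 hvext g hg
    have hvni : v ∉ Finset.image g Finset.univ := by
      intro hvg
      obtain ⟨i, _, hgi⟩ := Finset.mem_image.1 hvg
      exact not_mem_of_mem_mext hG hBne hvext i (hgi ▸ hg i)
    refine Finset.mem_image.2 ⟨insert v (Finset.image g Finset.univ), ?_, ?_⟩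
    · exact Finset.mem_filter.2 ⟨hins, Finset.mem_insert_self _ _⟩
    · rw [Finset.erase_insert hvni]
  · rintro ⟨hcard, hdisj, hedge⟩
    refine ⟨mem_mpre_iff.2 ⟨hcard, hdisj⟩, mem_mext_iff.2 fun g hg => ?_⟩
    have himg := hedge g hg
    obtain ⟨e, he, herase⟩ := Finset.mem_image.1 himg
    obtain ⟨heG, hve⟩ := Finset.mem_filter.1 he
    rw [← herase, Finset.insert_erase hve]
    exact heG

lemma sum_mext_card {G : Finset (Finset V)} {r' : ℕ} (hG : ∀ e ∈ G, e.card = r' + 1)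
    (b : Fin r' → ℕ) (hb : ∀ i, 1 ≤ b i) :
    ∑ B ∈ mpre (V := V) b, (mext G B).card
      = ∑ v : V, Nat.card {B : Fin r' → Finset V // IsCompleteMultipartiteCopy (link G v) b B} := by
  classical
  have h1 : ∀ B : Fin r' → Finset V, (mext G B).card = ∑ v : V, if v ∈ mext G B then 1 else 0 := by
    intro B
    rw [Finset.sum_ite_mem, Finset.univ_inter, Finset.card_eq_sum_ones]
  rw [Finset.sum_congr rfl fun B _ => h1 B, Finset.sum_comm]
  refine Finset.sum_congr rfl fun v _ => ?_
  rw [Nat.card_eq_fintype_card, Fintype.card_subtype]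
  rw [← Finset.sum_filter]
  rw [Finset.card_eq_sum_ones]
  refine (Finset.sum_congr ?_ fun _ _ => rfl)
  ext B
  simp only [Finset.mem_filter, Finset.mem_univ, true_and]
  exact copy_link_iff hG b hb v B

lemma link_edge_card {G : Finset (Finset V)} {r' : ℕ} (hG : ∀ e ∈ G, e.card = r' + 1)
    (v : V) : ∀ e ∈ link G v, e.card = r' := by
  intro e he
  obtain ⟨e', he', rfl⟩ := Finset.mem_image.1 he
  obtain ⟨he'G, hve'⟩ := Finset.mem_filter.1 he'
  rw [Finset.card_erase_of_mem hve', hG _ he'G]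
  omega

lemma sum_link_card {G : Finset (Finset V)} {r' : ℕ} (hG : ∀ e ∈ G, e.card = r' + 1) :
    ∑ v : V, (link G v).card = (r' + 1) * G.card := by
  classical
  have h1 : ∀ v : V, (link G v).card = (G.filter fun e => v ∈ e).card := by
    intro v
    refine Finset.card_image_of_injOn ?_
    intro e1 h1 e2 h2 hee
    have hv1 : v ∈ e1 := (Finset.mem_filter.1 h1).2
    have hv2 : v ∈ e2 := (Finset.mem_filter.1 h2).2
    rw [← Finset.insert_erase hv1, ← Finset.insert_erase hv2]
    exact congrArg (insert v) hee
  simp_rw [h1, Finset.card_filter]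
  rw [Finset.sum_comm]
  have h2 : ∀ e ∈ G, (∑ v : V, if v ∈ e then 1 else 0) = r' + 1 := by
    intro e he
    rw [Finset.sum_ite_mem, Finset.univ_inter, ← Finset.card_eq_sum_ones]
    exact hG e he
  rw [Finset.sum_congr rfl h2, Finset.sum_const, smul_eq_mul, mul_comm]


lemma copies_lower {G : Finset (Finset V)} {r' : ℕ} (hG : ∀ e ∈ G, e.card = r' + 1)
    (a : Fin (r'+1) → ℕ) (ha : ∀ i, 2 ≤ a i) :
    ∑ B ∈ mpre (V := V) (fun i => a i.castSucc), ((mext G B).card.choose (a (Fin.last r')))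
      ≤ Nat.card {A : Fin (r'+1) → Finset V // IsCompleteMultipartiteCopy G a A} := by
  classical
  rw [Nat.card_eq_fintype_card, Fintype.card_subtype]
  have hsig : ∑ B ∈ mpre (V:=V) (fun i => a i.castSucc), ((mext G B).card.choose (a (Fin.last r')))
      = ((mpre (V:=V) (fun i => a i.castSucc)).sigma
          (fun B => (mext G B).powersetCard (a (Fin.last r')))).card := by
    rw [Finset.card_sigma]
    exact Finset.sum_congr rfl fun B _ => (Finset.card_powersetCard _ _).symm
  rw [hsig]
  refine Finset.card_le_card_of_injOn (fun p => Fin.snoc p.1 p.2) ?_ ?_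
  · rintro ⟨B, Ar⟩ hp
    simp only [Finset.mem_coe, Finset.mem_sigma] at hp
    obtain ⟨hB, hAr⟩ := hp
    obtain ⟨hcard, hdisj⟩ := mem_mpre_iff.1 hB
    obtain ⟨hArsub, hArcard⟩ := Finset.mem_powersetCard.1 hAr
    have hBne : ∀ i, (B i).Nonempty := fun i =>
      Finset.card_pos.1 (by rw [hcard i]; have := ha i.castSucc; omega)
    have hdisjA : ∀ j, Disjoint (B j) Ar := fun j => Finset.disjoint_left.2
      (fun {u} hu huA => not_mem_of_mem_mext hG hBne (hArsub huA) j hu)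
    refine Finset.mem_filter.2 ⟨Finset.mem_univ _, ?_, ?_, ?_⟩
    · intro i
      refine Fin.lastCases ?_ ?_ i
      · simp [Fin.snoc_last, hArcard]
      · intro j; simp [Fin.snoc_castSucc, hcard j]
    · intro i j hij
      rcases Fin.eq_castSucc_or_eq_last i with ⟨i', rfl⟩ | rfl <;>
        rcases Fin.eq_castSucc_or_eq_last j with ⟨j', rfl⟩ | rfl
      · simp only [Fin.snoc_castSucc]
        exact hdisj i' j' (fun h => hij (congrArg Fin.castSucc h))
      · simp only [Fin.snoc_last, Fin.snoc_castSucc]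
        exact hdisjA i'
      · simp only [Fin.snoc_last, Fin.snoc_castSucc]
        exact (hdisjA j').symm
      · exact absurd rfl hij
    · intro f hf
      have hflast : f (Fin.last r') ∈ Ar := by simpa [Fin.snoc_last] using hf (Fin.last r')
      have hg : ∀ i : Fin r', f i.castSucc ∈ B i := by
        intro i; simpa [Fin.snoc_castSucc] using hf i.castSucc
      have himg : Finset.image f Finset.univ
          = insert (f (Fin.last r')) (Finset.image (fun i : Fin r' => f i.castSucc) Finset.univ) := by
        rw [Fin.univ_castSuccEmb, Finset.cons_eq_insert, Finset.image_insert, Finset.map_eq_image, Finset.image_image]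
        rfl
      rw [himg]
      exact mem_mext_iff.1 (hArsub hflast) _ hg
  · rintro ⟨B, Ar⟩ _ ⟨B', Ar'⟩ _ h
    have h2 : B = B' := funext fun i => by
      have := congrFun h i.castSucc
      simpa [Fin.snoc_castSucc] using this
    subst h2
    have h1 : Ar = Ar' := by
      have := congrFun h (Fin.last r')
      simpa [Fin.snoc_last] using this
    subst h1
    rfl

lemma mpre_card_le {r' : ℕ} (b : Fin r' → ℕ) :
    (mpre (V := V) b).card ≤ (Fintype.card V) ^ (∑ i, b i) := by
  classical
  have hsub : mpre (V := V) b ⊆ Fintype.piFinset (fun i => (univ : Finset V).powersetCard (b i)) := by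
    intro B hB
    obtain ⟨hcard, _⟩ := mem_mpre_iff.1 hB
    exact Fintype.mem_piFinset.2 fun i => Finset.mem_powersetCard.2 ⟨Finset.subset_univ _, hcard i⟩
  calc (mpre (V:=V) b).card ≤ _ := Finset.card_le_card hsub
  _ = ∏ i, ((univ : Finset V).powersetCard (b i)).card := Fintype.card_piFinset _
  _ = ∏ i, (Fintype.card V).choose (b i) := by simp [Finset.card_powersetCard]
  _ ≤ ∏ i, (Fintype.card V) ^ (b i) := Finset.prod_le_prod' (fun i _ => Nat.choose_le_pow _ _)
  _ = (Fintype.card V) ^ (∑ i, b i) := Finset.prod_pow_eq_pow_sum _ _ _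

lemma base_count {G : Finset (Finset V)} (hG : ∀ e ∈ G, e.card = 1) (a : Fin 1 → ℕ) :
    G.card.choose (a 0) ≤ Nat.card {A : Fin 1 → Finset V // IsCompleteMultipartiteCopy G a A} := by
  classical
  rw [Nat.card_eq_fintype_card, Fintype.card_subtype]
  set supp : Finset V := univ.filter fun v => ({v} : Finset V) ∈ G with hsupp
  have hscard : supp.card = G.card := by
    have himg : supp.image (fun v => ({v} : Finset V)) = G := by
      ext e
      simp only [Finset.mem_image, hsupp, Finset.mem_filter, Finset.mem_univ, true_and]
      constructor
      · rintro ⟨v, hv, rfl⟩; exact hv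
      · intro he
        obtain ⟨v, rfl⟩ := Finset.card_eq_one.1 (hG e he)
        exact ⟨v, he, rfl⟩
    rw [← himg]
    exact (Finset.card_image_of_injective _ (fun x y h => by simpa using h)).symm
  rw [← hscard, ← Finset.card_powersetCard (a 0) supp]
  refine Finset.card_le_card_of_injOn (fun s => fun _ => s) ?_ ?_
  · intro s hs
    obtain ⟨hsub, hcard⟩ := Finset.mem_powersetCard.1 hs
    refine Finset.mem_filter.2 ⟨Finset.mem_univ _, ?_, ?_, ?_⟩
    · intro i
      have : i = 0 := Subsingleton.elim i 0
      subst this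
      exact hcard
    · intro i j hij
      exact absurd (Subsingleton.elim i j) hij
    · intro f hf
      have huniv : (Finset.univ : Finset (Fin 1)) = {0} := rfl
      have himg : Finset.image f Finset.univ = {f 0} := by
        rw [huniv, Finset.image_singleton]
      rw [himg]
      have := hsub (hf 0)
      rw [hsupp] at this
      exact (Finset.mem_filter.1 this).2
  · intro s _ t _ h
    exact congrFun h 0


lemma main_aux : ∀ r : ℕ, 1 ≤ r → ∀ a : Fin r → ℕ, (∀ i, 2 ≤ a i) →
    ∃ C : ℝ, 0 < C ∧ ∃ c : ℝ, 0 < c ∧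
      ∀ (n : ℕ) (V : Type) [Fintype V] [DecidableEq V] (G : Finset (Finset V)) (m : ℕ),
        Fintype.card V = n →
        (∀ e ∈ G, e.card = r) →
        m = G.card →
        C * (n : ℝ) ^ ((r : ℝ) - 1 / (∏ i : Fin r, if (i : ℕ) < r - 1 then (a i : ℝ) else 1)) ≤ (m : ℝ) →
        c * (m : ℝ) ^ (∏ i : Fin r, a i) *
            (n : ℝ) ^ ((∑ i : Fin r, (a i : ℝ)) - r * ∏ i : Fin r, (a i : ℝ)) ≤
          (Nat.card {A : Fin r → Finset V // IsCompleteMultipartiteCopy G a A} : ℝ) := by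
  intro r
  induction r with
  | zero => omega
  | succ r' IH =>
    rcases Nat.eq_zero_or_pos r' with rfl | hr'pos
    · -- base case r = 1
      intro _ a ha2
      refine ⟨2 * (a 0 : ℝ), by have := ha2 0; positivity, ((2 * (a 0 : ℝ))⁻¹)^(a 0),
        by have := ha2 0; positivity, ?_⟩
      intro n V _ _ G m hn hG hm hthr
      have ha0 : 2 ≤ a 0 := ha2 0
      have hprod1 : (∏ i : Fin 1, if (i : ℕ) < 1 - 1 then (a i : ℝ) else 1) = 1 := by
        simp
      rw [hprod1] at hthr
      have hexp0 : ((1 : ℕ) : ℝ) - 1 / 1 = 0 := by norm_num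
      rw [hexp0, Real.rpow_zero, mul_one] at hthr
      have hm2a : 2 * a 0 ≤ m := by exact_mod_cast hthr
      have htgt : ((∑ i : Fin 1, (a i : ℝ)) - (1 : ℕ) * ∏ i : Fin 1, (a i : ℝ)) = 0 := by
        simp
      rw [htgt, Real.rpow_zero, mul_one]
      have hPa : (∏ i : Fin 1, a i) = a 0 := by simp
      rw [hPa]
      have hcount : (m.choose (a 0) : ℝ)
          ≤ (Nat.card {A : Fin 1 → Finset V // IsCompleteMultipartiteCopy G a A} : ℝ) := by
        have := base_count (G := G) (by simpa using hG) a
        rw [← hm] at this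
        exact_mod_cast this
      refine le_trans ?_ hcount
      have haux := pow_le_choose m (a 0)
      have hc1 : ((m + 1 - a 0 : ℕ) : ℝ) = (m : ℝ) + 1 - (a 0 : ℝ) := by
        have : a 0 ≤ m + 1 := by omega
        push_cast [Nat.cast_sub this]
        ring
      have ha0R : (2 : ℝ) ≤ (a 0 : ℝ) := by exact_mod_cast ha0
      have hmR : 2 * (a 0 : ℝ) ≤ (m : ℝ) := by exact_mod_cast hm2a
      have hkey : ((2 * (a 0 : ℝ))⁻¹)^(a 0) * (m:ℝ)^(a 0) = ((m:ℝ) / (2 * (a 0:ℝ)))^(a 0) := by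
        rw [div_eq_mul_inv, mul_pow]
        ring
      rw [hkey]
      have h1 : (m:ℝ)/(2 * (a 0:ℝ)) ≤ ((m + 1 - a 0 : ℕ):ℝ)/(a 0:ℝ) := by
        rw [hc1, div_le_div_iff₀ (by positivity) (by positivity)]
        nlinarith
      calc ((m:ℝ)/(2 * (a 0:ℝ)))^(a 0) ≤ (((m + 1 - a 0 : ℕ):ℝ)/(a 0:ℝ))^(a 0) :=
            pow_le_pow_left₀ (by positivity) h1 _
        _ = ((m + 1 - a 0 : ℕ):ℝ)^(a 0) / (a 0:ℝ)^(a 0) := div_pow _ _ _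
        _ ≤ (m.choose (a 0) : ℝ) := by
            rw [div_le_iff₀ (by positivity)]
            calc ((m + 1 - a 0 : ℕ):ℝ)^(a 0) ≤ (a 0:ℝ)^(a 0) * (m.choose (a 0) : ℝ) := haux
              _ = (m.choose (a 0) : ℝ) * (a 0:ℝ)^(a 0) := by ring
    · -- inductive step r = r' + 1 with r' ≥ 1
      intro _ a ha2
      obtain ⟨C', hC', c', hc', hIH⟩ := IH hr'pos (fun i => a i.castSucc) (fun i => ha2 _)
      set aL : ℕ := a (Fin.last r') with haLdef
      have haL2 : 2 ≤ aL := ha2 _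
      have haLR : (2:ℝ) ≤ (aL:ℝ) := by exact_mod_cast haL2
      have haLRpos : (0:ℝ) < (aL:ℝ) := by linarith
      set P' : ℕ := ∏ i : Fin r', a i.castSucc with hP'def
      set S' : ℕ := ∑ i : Fin r', a i.castSucc with hS'def
      have hP'1 : 1 ≤ P' := Finset.one_le_prod' (fun i _ => by have := ha2 i.castSucc; omega)
      have hP'R : ((P' : ℕ) : ℝ) = ∏ i : Fin r', ((a i.castSucc : ℕ) : ℝ) := by
        rw [hP'def]; push_cast; rfl
      have hS'R : ((S' : ℕ) : ℝ) = ∑ i : Fin r', ((a i.castSucc : ℕ) : ℝ) := by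
        rw [hS'def]; push_cast; rfl
      have hP'Rpos : (0:ℝ) < (P' : ℝ) := by exact_mod_cast hP'1
      refine ⟨1 + C' + 2*(aL:ℝ)/c', by positivity, (c'/2)^aL / (aL:ℝ)^aL, by positivity, ?_⟩
      intro n V _ _ G m hn hG hm hthr
      -- rewrite the threshold product
      have hTprod : (∏ i : Fin (r'+1), if (i : ℕ) < (r'+1) - 1 then (a i : ℝ) else 1)
          = (P' : ℝ) := by
        rw [Fin.prod_univ_castSucc]
        have h1 : ∀ i : Fin r',
            (if ((i.castSucc : Fin (r'+1)) : ℕ) < (r'+1) - 1 then (a i.castSucc : ℝ) else 1)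
            = (a i.castSucc : ℝ) := fun i => by
          rw [if_pos]; simpa using i.isLt
        rw [Finset.prod_congr rfl (fun i _ => h1 i), if_neg (by simp), mul_one, hP'R]
      rw [hTprod] at hthr
      -- dispatch n = 0
      rcases Nat.eq_zero_or_pos n with rfl | hn1
      · have hVempty : IsEmpty V := Fintype.card_eq_zero_iff.1 hn
        have hm0 : m = 0 := by
          rw [hm]
          rcases Finset.eq_empty_or_nonempty G with rfl | ⟨e, he⟩
          · simp
          · exfalso
            have hcard := hG e he
            have : e.Nonempty := Finset.card_pos.1 (by omega)
            exact hVempty.false this.choose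
        rw [hm0]
        have hPne : (∏ i : Fin (r'+1), a i) ≠ 0 := by
          refine Nat.pos_iff_ne_zero.1 (Finset.prod_pos (fun i _ => ?_)) 
          have := ha2 i; omega
        rw [Nat.cast_zero, zero_pow hPne, mul_zero, zero_mul]
        exact Nat.cast_nonneg _
      -- now n ≥ 1
      have hNpos : (0:ℝ) < (n:ℝ) := by exact_mod_cast hn1
      have hN1 : (1:ℝ) ≤ (n:ℝ) := by exact_mod_cast hn1
      have hr'R : (1:ℝ) ≤ (r' : ℝ) := by exact_mod_cast hr'pos
      set α : ℝ := ((r'+1 : ℕ) : ℝ) - 1 / (P' : ℝ) with hαdef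
      have h1P' : 1 / (P':ℝ) ≤ 1 := by
        rw [div_le_one hP'Rpos]; exact_mod_cast hP'1
      have hα1 : 1 ≤ α := by
        rw [hαdef]; push_cast; linarith
      have hNα1 : 1 ≤ (n:ℝ) ^ α := by
        have h := Real.rpow_le_rpow_of_exponent_le hN1 (show (0:ℝ) ≤ α by linarith)
        rwa [Real.rpow_zero] at h
      have hCb1 : (1:ℝ) ≤ 1 + C' + 2*(aL:ℝ)/c' := by
        have h1 : (0:ℝ) ≤ 2*(aL:ℝ)/c' := by positivity
        linarith
      have hmR1 : (1:ℝ) ≤ (m:ℝ) := by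
        calc (1:ℝ) = 1 * 1 := by ring
        _ ≤ (1 + C' + 2*(aL:ℝ)/c') * (n:ℝ) ^ α := by
            exact mul_le_mul hCb1 hNα1 zero_le_one (by positivity)
        _ ≤ (m:ℝ) := hthr
      have hm1 : 1 ≤ m := by exact_mod_cast hmR1
      -- the link threshold
      set P'' : ℝ := ∏ i : Fin r', if (i : ℕ) < r' - 1 then ((a i.castSucc : ℕ) : ℝ) else 1
        with hP''def
      have hP''1 : (1:ℝ) ≤ P'' := by
        rw [hP''def]
        calc (1:ℝ) = ∏ _i : Fin r', (1:ℝ) := by simp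
        _ ≤ ∏ i : Fin r', (if (i : ℕ) < r' - 1 then ((a i.castSucc : ℕ) : ℝ) else 1) := by
          refine Finset.prod_le_prod (fun i _ => zero_le_one) (fun i _ => ?_)
          split_ifs with h
          · have h2 : (2:ℝ) ≤ ((a i.castSucc : ℕ):ℝ) := by exact_mod_cast ha2 i.castSucc
            linarith
          · exact le_rfl
      have hP''pos : (0:ℝ) < P'' := by linarith
      have hP''le : P'' ≤ (P' : ℝ) := by
        rw [hP''def, hP'R]
        refine Finset.prod_le_prod (fun i _ => ?_) (fun i _ => ?_)
        · split_ifs with h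
          · positivity
          · exact zero_le_one
        · split_ifs with h
          · exact le_refl _
          · exact_mod_cast Nat.one_le_iff_ne_zero.2 (by have := ha2 i.castSucc; omega)
      set TH : ℝ := C' * (n:ℝ) ^ ((r' : ℝ) - 1 / P'') with hTHdef
      set heavy : Finset V := Finset.univ.filter (fun v => TH ≤ ((link G v).card : ℝ))
        with hheavydef
      have hlink_card : ∀ v : V, ∀ e ∈ link G v, e.card = r' := fun v => link_edge_card hG v
      have hsumlinks : ∑ v : V, ((link G v).card : ℝ) = ((r':ℝ)+1) * (m:ℝ) := by
        have h := sum_link_card hG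
        rw [← hm] at h
        exact_mod_cast congrArg (Nat.cast (R := ℝ)) h
      have hTHpos : 0 ≤ TH := by rw [hTHdef]; positivity
      have hexple : 1 + ((r' : ℝ) - 1 / P'') ≤ α := by
        rw [hαdef]
        push_cast
        have : 1 / (P':ℝ) ≤ 1 / P'' := one_div_le_one_div_of_le hP''pos hP''le
        linarith
      have hlight : ∑ v ∈ Finset.univ.filter (fun v => ¬ TH ≤ ((link G v).card : ℝ)),
          ((link G v).card : ℝ) ≤ (m:ℝ) := by
        calc ∑ v ∈ Finset.univ.filter (fun v => ¬ TH ≤ ((link G v).card : ℝ)),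
              ((link G v).card : ℝ)
            ≤ ∑ _v ∈ Finset.univ.filter (fun v => ¬ TH ≤ ((link G v).card : ℝ)), TH :=
              Finset.sum_le_sum (fun v hv => le_of_not_ge (Finset.mem_filter.1 hv).2)
          _ = ((Finset.univ.filter (fun v => ¬ TH ≤ ((link G v).card : ℝ))).card : ℝ) * TH := by
              rw [Finset.sum_const, nsmul_eq_mul]
          _ ≤ (n:ℝ) * TH := by
              refine mul_le_mul_of_nonneg_right ?_ hTHpos
              have h1 := Finset.card_filter_le (Finset.univ : Finset V)
                (fun v => ¬ TH ≤ ((link G v).card : ℝ))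
              rw [Finset.card_univ, hn] at h1
              exact_mod_cast h1
          _ ≤ (m:ℝ) := by
              rw [hTHdef]
              calc (n:ℝ) * (C' * (n:ℝ) ^ ((r' : ℝ) - 1 / P''))
                  = C' * ((n:ℝ) ^ (1:ℝ) * (n:ℝ) ^ ((r' : ℝ) - 1 / P'')) := by
                    rw [Real.rpow_one]; ring
                _ = C' * (n:ℝ) ^ (1 + ((r' : ℝ) - 1 / P'')) := by
                    rw [← Real.rpow_add hNpos]
                _ ≤ (1 + C' + 2*(aL:ℝ)/c') * (n:ℝ) ^ α := by
                    refine mul_le_mul ?_ (Real.rpow_le_rpow_of_exponent_le hN1 hexple)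
                      (by positivity) (by positivity)
                    have : (0:ℝ) ≤ 2*(aL:ℝ)/c' := by positivity
                    linarith
                _ ≤ (m:ℝ) := hthr
      have hheavy_sum : (m:ℝ) ≤ ∑ v ∈ heavy, ((link G v).card : ℝ) := by
        have hsplit := Finset.sum_filter_add_sum_filter_not Finset.univ
          (fun v => TH ≤ ((link G v).card : ℝ)) (fun v => ((link G v).card : ℝ))
        rw [hsumlinks] at hsplit
        have hmul : (m:ℝ) * 1 ≤ (m:ℝ) * (r' : ℝ) :=
          mul_le_mul_of_nonneg_left hr'R (by positivity)
        rw [hheavydef]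
        linarith [hlight, hsplit, hmul]
      have hheavy_ne : heavy.Nonempty := by
        by_contra hne
        rw [Finset.not_nonempty_iff_eq_empty] at hne
        rw [hne, Finset.sum_empty] at hheavy_sum
        linarith
      have hhc1 : (1:ℝ) ≤ (heavy.card : ℝ) := by
        exact_mod_cast Finset.card_pos.2 hheavy_ne
      have hhcN : (heavy.card : ℝ) ≤ (n:ℝ) := by
        have h1 : heavy.card ≤ n := by
          rw [hheavydef]
          have := Finset.card_filter_le (Finset.univ : Finset V)
            (fun v => TH ≤ ((link G v).card : ℝ))
          rwa [Finset.card_univ, hn] at this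
        exact_mod_cast h1
      -- the IH bound on heavy links
      set E' : ℝ := (∑ i : Fin r', ((a i.castSucc : ℕ):ℝ))
          - (r' : ℝ) * ∏ i : Fin r', ((a i.castSucc : ℕ):ℝ) with hE'def
      have hIHv : ∀ v ∈ heavy,
          c' * ((link G v).card : ℝ) ^ P' * (n:ℝ) ^ E'
            ≤ (Nat.card {B : Fin r' → Finset V //
                IsCompleteMultipartiteCopy (link G v) (fun i => a i.castSucc) B} : ℝ) := by
        intro v hv
        exact hIH n V (link G v) ((link G v).card) hn (hlink_card v) rfl
          (Finset.mem_filter.1 hv).2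
      set M : Finset (Fin r' → Finset V) := mpre (V := V) (fun i => a i.castSucc) with hMdef
      set D : ℕ := ∑ B ∈ M, (mext G B).card with hDdef
      have hDcast : (D:ℝ) = ∑ v : V, (Nat.card {B : Fin r' → Finset V //
          IsCompleteMultipartiteCopy (link G v) (fun i => a i.castSucc) B} : ℝ) := by
        have h := sum_mext_card (V := V) hG (fun i => a i.castSucc)
          (fun i => by show 1 ≤ a i.castSucc; have := ha2 i.castSucc; omega)
        rw [hDdef, hMdef]
        exact_mod_cast congrArg (Nat.cast (R := ℝ)) h
      have hDge : ∑ v ∈ heavy, (c' * ((link G v).card : ℝ) ^ P' * (n:ℝ) ^ E') ≤ (D:ℝ) := by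
        rw [hDcast]
        calc ∑ v ∈ heavy, (c' * ((link G v).card : ℝ) ^ P' * (n:ℝ) ^ E')
            ≤ ∑ v ∈ heavy, (Nat.card {B : Fin r' → Finset V //
                IsCompleteMultipartiteCopy (link G v) (fun i => a i.castSucc) B} : ℝ) :=
              Finset.sum_le_sum hIHv
          _ ≤ ∑ v : V, (Nat.card {B : Fin r' → Finset V //
                IsCompleteMultipartiteCopy (link G v) (fun i => a i.castSucc) B} : ℝ) :=
              Finset.sum_le_sum_of_subset_of_nonneg (Finset.subset_univ _)
                (fun _ _ _ => Nat.cast_nonneg _)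
      have hJ1 : (m:ℝ) ^ P' / (n:ℝ) ^ (P' - 1)
          ≤ ∑ v ∈ heavy, ((link G v).card : ℝ) ^ P' := by
        have hj := pow_sum_div_card_le_sum_pow (s := heavy)
          (f := fun v => ((link G v).card : ℝ)) (fun i _ => Nat.cast_nonneg _) (P' - 1)
        rw [show P' - 1 + 1 = P' from by omega] at hj
        refine le_trans ?_ hj
        exact div_le_div₀ (pow_nonneg (Finset.sum_nonneg fun v _ => Nat.cast_nonneg _) _)
          (pow_le_pow_left₀ (Nat.cast_nonneg _) hheavy_sum _)
          (pow_pos (lt_of_lt_of_le one_pos hhc1) _)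
          (pow_le_pow_left₀ (Nat.cast_nonneg _) hhcN _)
      set E2 : ℝ := E' - ((P' - 1 : ℕ) : ℝ) with hE2def
      have hDlow : c' * (m:ℝ) ^ P' * (n:ℝ) ^ E2 ≤ (D:ℝ) := by
        have hstep : c' * (n:ℝ) ^ E' * ((m:ℝ) ^ P' / (n:ℝ) ^ (P' - 1))
            ≤ c' * (n:ℝ) ^ E' * ∑ v ∈ heavy, ((link G v).card : ℝ) ^ P' :=
          mul_le_mul_of_nonneg_left hJ1 (by positivity)
        have hx : (n:ℝ) ^ E2 = (n:ℝ) ^ E' / (n:ℝ) ^ (P' - 1 : ℕ) := by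
          rw [hE2def, Real.rpow_sub hNpos E' (((P' - 1 : ℕ)) : ℝ), Real.rpow_natCast]
        have hid : c' * (n:ℝ) ^ E' * ((m:ℝ) ^ P' / (n:ℝ) ^ (P' - 1))
            = c' * (m:ℝ) ^ P' * (n:ℝ) ^ E2 := by
          rw [hx]
          ring
        have hsum_eq : c' * (n:ℝ) ^ E' * ∑ v ∈ heavy, ((link G v).card : ℝ) ^ P'
            = ∑ v ∈ heavy, (c' * ((link G v).card : ℝ) ^ P' * (n:ℝ) ^ E') := by
          rw [Finset.mul_sum]
          exact Finset.sum_congr rfl (fun v _ => by ring)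
        rw [hid] at hstep
        rw [hsum_eq] at hstep
        exact le_trans hstep hDge
      -- D is large
      have hCb0 : (0:ℝ) ≤ 2*(aL:ℝ)/c' := by positivity
      have hself : (1 + C' + 2*(aL:ℝ)/c') ≤ (1 + C' + 2*(aL:ℝ)/c') ^ P' :=
        le_self_pow₀ (by linarith) (by omega)
      have hc'C : 2*(aL:ℝ) ≤ c' * (1 + C' + 2*(aL:ℝ)/c') ^ P' := by
        have h1 : c' * (2*(aL:ℝ)/c') ≤ c' * (1 + C' + 2*(aL:ℝ)/c') ^ P' := by
          refine mul_le_mul_of_nonneg_left (le_trans ?_ hself) (le_of_lt hc')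
          linarith
        rwa [mul_div_cancel₀ _ (ne_of_gt hc')] at h1
      have hmP : ((1 + C' + 2*(aL:ℝ)/c')) ^ P' * ((n:ℝ) ^ α) ^ P' ≤ (m:ℝ) ^ P' := by
        rw [← mul_pow]
        exact pow_le_pow_left₀ (by positivity) hthr _
      have hrw1 : ((n:ℝ) ^ α) ^ P' = (n:ℝ) ^ (α * (P':ℝ)) := by
        rw [← Real.rpow_natCast ((n:ℝ) ^ α) P', ← Real.rpow_mul (le_of_lt hNpos)]
      have hP'ne : ((P':ℕ):ℝ) ≠ 0 := ne_of_gt hP'Rpos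
      have hexpS : α * (P':ℝ) + E2 = ((S':ℕ):ℝ) := by
        rw [hαdef, hE2def, hE'def, ← hP'R, ← hS'R, Nat.cast_sub hP'1]
        push_cast
        field_simp
        ring
      have hDS : 2*(aL:ℝ) * (n:ℝ) ^ (S':ℕ) ≤ (D:ℝ) := by
        have h2 : c' * (((1 + C' + 2*(aL:ℝ)/c') ^ P' * ((n:ℝ) ^ α) ^ P') * (n:ℝ) ^ E2)
            ≤ c' * ((m:ℝ) ^ P' * (n:ℝ) ^ E2) := by
          refine mul_le_mul_of_nonneg_left
            (mul_le_mul_of_nonneg_right hmP (by positivity)) (le_of_lt hc')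
        have h3 : c' * (((1 + C' + 2*(aL:ℝ)/c') ^ P' * ((n:ℝ) ^ α) ^ P') * (n:ℝ) ^ E2)
            = (c' * (1 + C' + 2*(aL:ℝ)/c') ^ P') * (n:ℝ) ^ ((S':ℕ):ℝ) := by
          rw [hrw1, ← hexpS, Real.rpow_add hNpos]
          ring
        have h4 : 2*(aL:ℝ) * (n:ℝ) ^ ((S':ℕ):ℝ)
            ≤ (c' * (1 + C' + 2*(aL:ℝ)/c') ^ P') * (n:ℝ) ^ ((S':ℕ):ℝ) :=
          mul_le_mul_of_nonneg_right hc'C (by positivity)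
        have h5 : (n:ℝ) ^ ((S':ℕ):ℝ) = (n:ℝ) ^ (S':ℕ) := Real.rpow_natCast _ _
        rw [h5] at h4 h3
        have h6 : c' * ((m:ℝ) ^ P' * (n:ℝ) ^ E2) = c' * (m:ℝ) ^ P' * (n:ℝ) ^ E2 := by ring
        rw [h3, h6] at h2
        linarith [hDlow]
      have hNS'pos : (0:ℝ) < (n:ℝ) ^ (S':ℕ) := pow_pos hNpos _
      have hDpos : (0:ℝ) < (D:ℝ) :=
        lt_of_lt_of_le (mul_pos (by linarith) hNS'pos) hDS
      have hmpre_ne : M.Nonempty := by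
        by_contra hne
        rw [Finset.not_nonempty_iff_eq_empty] at hne
        have hD0 : D = 0 := by rw [hDdef, hne, Finset.sum_empty]
        rw [hD0] at hDpos
        norm_num at hDpos
      have hmpre_pos : (0:ℝ) < ((M.card : ℕ) : ℝ) := by
        exact_mod_cast Finset.card_pos.2 hmpre_ne
      have hmpre_card : ((M.card : ℕ) : ℝ) ≤ (n:ℝ) ^ (S':ℕ) := by
        have h := mpre_card_le (V := V) (fun i => a i.castSucc)
        rw [hn] at h
        have h2 : M.card ≤ n ^ (S':ℕ) := by
          rw [hMdef, hS'def]; exact h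
        calc ((M.card : ℕ) : ℝ) ≤ ((n ^ (S':ℕ) : ℕ) : ℝ) := by exact_mod_cast h2
          _ = (n:ℝ) ^ (S':ℕ) := by push_cast; ring
      have hDsum : (D:ℝ) = ∑ B ∈ M, ((mext G B).card : ℝ) := by
        rw [hDdef]
        push_cast
        rfl
      have hsum_g : (D:ℝ)/2 ≤ ∑ B ∈ M, (((mext G B).card + 1 - aL : ℕ) : ℝ) := by
        have h1 : ∀ B ∈ M, ((mext G B).card : ℝ) - ((aL:ℝ) - 1)
            ≤ (((mext G B).card + 1 - aL : ℕ) : ℝ) := by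
          intro B _
          have h := cast_sub_ge ((mext G B).card + 1) aL
          push_cast at h
          linarith
        have h2 := Finset.sum_le_sum h1
        rw [Finset.sum_sub_distrib, Finset.sum_const, nsmul_eq_mul, ← hDsum] at h2
        have h4 : ((aL:ℝ)-1) * ((M.card:ℕ):ℝ) ≤ ((aL:ℝ)-1) * (n:ℝ)^(S':ℕ) :=
          mul_le_mul_of_nonneg_left hmpre_card (by linarith)
        have h5 : ((aL:ℝ)-1) * (n:ℝ)^(S':ℕ) ≤ (aL:ℝ) * (n:ℝ)^(S':ℕ) :=
          mul_le_mul_of_nonneg_right (by linarith) (le_of_lt hNS'pos)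
        linarith [h2, h4, h5, hDS]
      have haLpowpos : (0:ℝ) < (aL:ℝ)^aL := pow_pos haLRpos _
      have hMpowpos : (0:ℝ) < (((M.card:ℕ)):ℝ)^(aL-1) := pow_pos hmpre_pos _
      have hJ2 : ((D:ℝ)/2)^aL / ((((M.card:ℕ)):ℝ)^(aL-1) * (aL:ℝ)^aL)
          ≤ ∑ B ∈ M, (((mext G B).card.choose aL : ℕ) : ℝ) := by
        have hj := pow_sum_div_card_le_sum_pow (s := M)
          (f := fun B => (((mext G B).card + 1 - aL : ℕ) : ℝ))
          (fun i _ => Nat.cast_nonneg _) (aL - 1)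
        rw [show aL - 1 + 1 = aL from by omega] at hj
        have hsumpow : ∑ B ∈ M, ((((mext G B).card + 1 - aL : ℕ) : ℝ))^aL
            ≤ (aL:ℝ)^aL * ∑ B ∈ M, (((mext G B).card.choose aL : ℕ) : ℝ) := by
          rw [Finset.mul_sum]
          exact Finset.sum_le_sum (fun B _ => pow_le_choose _ _)
        calc ((D:ℝ)/2)^aL / ((((M.card:ℕ)):ℝ)^(aL-1) * (aL:ℝ)^aL)
            = (((D:ℝ)/2)^aL / (((M.card:ℕ)):ℝ)^(aL-1)) / (aL:ℝ)^aL := by rw [div_div]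
          _ ≤ ((∑ B ∈ M, (((mext G B).card + 1 - aL : ℕ) : ℝ))^aL
                / (((M.card:ℕ)):ℝ)^(aL-1)) / (aL:ℝ)^aL := by
              exact (div_le_div_iff_of_pos_right haLpowpos).2 ((div_le_div_iff_of_pos_right hMpowpos).2
                (pow_le_pow_left₀ (div_nonneg (Nat.cast_nonneg _) (by norm_num)) hsum_g _))
          _ ≤ (∑ B ∈ M, ((((mext G B).card + 1 - aL : ℕ) : ℝ))^aL) / (aL:ℝ)^aL := by
              exact (div_le_div_iff_of_pos_right haLpowpos).2 hj
          _ ≤ ∑ B ∈ M, (((mext G B).card.choose aL : ℕ) : ℝ) := by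
              rw [div_le_iff₀ haLpowpos]
              linarith [hsumpow]
      -- conclude
      have hcount := copies_lower hG a ha2
      have hcountR : ∑ B ∈ M, (((mext G B).card.choose aL : ℕ) : ℝ)
          ≤ (Nat.card {A : Fin (r'+1) → Finset V // IsCompleteMultipartiteCopy G a A} : ℝ) := by
        rw [hMdef, haLdef]
        exact_mod_cast hcount
      have hprodsplit : (∏ i : Fin (r'+1), a i) = P' * aL := by
        rw [hP'def, haLdef]
        exact Fin.prod_univ_castSucc a
      have hsumR : (∑ i : Fin (r'+1), ((a i : ℕ):ℝ)) = ((S':ℕ):ℝ) + ((aL:ℕ):ℝ) := by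
        rw [Fin.sum_univ_castSucc, ← hS'R, haLdef]
      have hprodR2 : (∏ i : Fin (r'+1), ((a i : ℕ):ℝ)) = ((P':ℕ):ℝ) * ((aL:ℕ):ℝ) := by
        rw [Fin.prod_univ_castSucc, ← hP'R, haLdef]
      have hEtgt : ((∑ i : Fin (r'+1), ((a i:ℕ):ℝ))
            - ((r'+1:ℕ):ℝ) * ∏ i : Fin (r'+1), ((a i:ℕ):ℝ))
          + ((S' * (aL - 1) : ℕ):ℝ) = E2 * ((aL:ℕ):ℝ) := by
        rw [hsumR, hprodR2, hE2def, hE'def, ← hP'R, ← hS'R, Nat.cast_sub hP'1,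
          Nat.cast_mul, Nat.cast_sub (show 1 ≤ aL by omega)]
        push_cast
        ring
      have hnexp : (n:ℝ) ^ ((∑ i : Fin (r'+1), ((a i:ℕ):ℝ))
            - ((r'+1:ℕ):ℝ) * ∏ i : Fin (r'+1), ((a i:ℕ):ℝ))
            * ((n:ℝ) ^ (S':ℕ)) ^ (aL-1) = ((n:ℝ) ^ E2) ^ aL := by
        rw [← pow_mul, ← Real.rpow_natCast (n:ℝ) (S' * (aL-1)), ← Real.rpow_add hNpos, hEtgt,
          Real.rpow_mul (le_of_lt hNpos), Real.rpow_natCast]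
      have hc20 : (0:ℝ) ≤ c'/2 := by linarith
      have hcnn : (0:ℝ) ≤ (c'/2)^aL / (aL:ℝ)^aL :=
        div_nonneg (pow_nonneg hc20 _) (pow_nonneg (Nat.cast_nonneg _) _)
      have hpre : (0:ℝ) ≤ (c'/2)^aL / (aL:ℝ)^aL * (m:ℝ)^(∏ i : Fin (r'+1), a i)
          * (n:ℝ) ^ ((∑ i : Fin (r'+1), ((a i:ℕ):ℝ))
            - ((r'+1:ℕ):ℝ) * ∏ i : Fin (r'+1), ((a i:ℕ):ℝ)) :=
        mul_nonneg (mul_nonneg hcnn (pow_nonneg (Nat.cast_nonneg _) _))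
          (Real.rpow_nonneg (Nat.cast_nonneg _) _)
      have hDlow2 : (c'/2) * (m:ℝ)^P' * (n:ℝ)^E2 ≤ (D:ℝ)/2 := by linarith [hDlow]
      have hDlow2nn : (0:ℝ) ≤ (c'/2) * (m:ℝ)^P' * (n:ℝ)^E2 :=
        mul_nonneg (mul_nonneg hc20 (pow_nonneg (Nat.cast_nonneg _) _))
          (Real.rpow_nonneg (Nat.cast_nonneg _) _)
      have hfin : (c'/2)^aL / (aL:ℝ)^aL * (m:ℝ)^(∏ i : Fin (r'+1), a i)
          * (n:ℝ) ^ ((∑ i : Fin (r'+1), ((a i:ℕ):ℝ))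
            - ((r'+1:ℕ):ℝ) * ∏ i : Fin (r'+1), ((a i:ℕ):ℝ))
          * ((((M.card:ℕ)):ℝ)^(aL-1) * (aL:ℝ)^aL) ≤ ((D:ℝ)/2)^aL := by
        calc (c'/2)^aL / (aL:ℝ)^aL * (m:ℝ)^(∏ i : Fin (r'+1), a i)
            * (n:ℝ) ^ ((∑ i : Fin (r'+1), ((a i:ℕ):ℝ))
              - ((r'+1:ℕ):ℝ) * ∏ i : Fin (r'+1), ((a i:ℕ):ℝ))
            * ((((M.card:ℕ)):ℝ)^(aL-1) * (aL:ℝ)^aL)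
            ≤ (c'/2)^aL / (aL:ℝ)^aL * (m:ℝ)^(∏ i : Fin (r'+1), a i)
            * (n:ℝ) ^ ((∑ i : Fin (r'+1), ((a i:ℕ):ℝ))
              - ((r'+1:ℕ):ℝ) * ∏ i : Fin (r'+1), ((a i:ℕ):ℝ))
            * (((n:ℝ) ^ (S':ℕ))^(aL-1) * (aL:ℝ)^aL) := by
              refine mul_le_mul_of_nonneg_left ?_ hpre
              exact mul_le_mul_of_nonneg_right
                (pow_le_pow_left₀ (Nat.cast_nonneg _) hmpre_card _) (le_of_lt haLpowpos)
          _ = ((c'/2) * (m:ℝ)^P' * (n:ℝ)^E2)^aL := by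
              rw [hprodsplit, pow_mul, mul_pow, mul_pow, ← hnexp]
              field_simp
          _ ≤ ((D:ℝ)/2)^aL := pow_le_pow_left₀ hDlow2nn hDlow2 _
      have hmain : (c'/2)^aL / (aL:ℝ)^aL * (m:ℝ)^(∏ i : Fin (r'+1), a i)
          * (n:ℝ) ^ ((∑ i : Fin (r'+1), ((a i:ℕ):ℝ))
            - ((r'+1:ℕ):ℝ) * ∏ i : Fin (r'+1), ((a i:ℕ):ℝ))
          ≤ ∑ B ∈ M, (((mext G B).card.choose aL : ℕ) : ℝ) := by
        rw [← mul_le_mul_iff_of_pos_right (mul_pos hMpowpos haLpowpos)]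
        calc (c'/2)^aL / (aL:ℝ)^aL * (m:ℝ)^(∏ i : Fin (r'+1), a i)
            * (n:ℝ) ^ ((∑ i : Fin (r'+1), ((a i:ℕ):ℝ))
              - ((r'+1:ℕ):ℝ) * ∏ i : Fin (r'+1), ((a i:ℕ):ℝ))
            * ((((M.card:ℕ)):ℝ)^(aL-1) * (aL:ℝ)^aL)
            ≤ ((D:ℝ)/2)^aL := hfin
          _ ≤ (∑ B ∈ M, (((mext G B).card.choose aL : ℕ) : ℝ))
              * ((((M.card:ℕ)):ℝ)^(aL-1) * (aL:ℝ)^aL) :=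
            (div_le_iff₀ (mul_pos hMpowpos haLpowpos)).1 hJ2
      exact le_trans hmain hcountR


end Super

/-- Theorem 1.3: for `2 ≤ a 0 ≤ … ≤ a (r-1)` there is `C > 0` (and an
implied constant `c > 0`) such that every `r`-graph with `n` vertices and
`m ≥ C·n^{r - 1/(a_1⋯a_{r-1})}` edges contains at least
`c · m^{a_1⋯a_r} · n^{a_1+⋯+a_r - r·a_1⋯a_r}` copies of `K^{(r)}_{a_1,…,a_r}`. -/
theorem supersaturation_complete_multipartite (r : ℕ) (hr : 1 ≤ r) (a : Fin r → ℕ)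
    (ha2 : ∀ i, 2 ≤ a i) (hmono : Monotone a) :
    ∃ C : ℝ, 0 < C ∧ ∃ c : ℝ, 0 < c ∧
      ∀ (n : ℕ) (V : Type) [Fintype V] [DecidableEq V] (G : Finset (Finset V)) (m : ℕ),
        Fintype.card V = n →
        (∀ e ∈ G, e.card = r) →
        m = G.card →
        C * (n : ℝ) ^ ((r : ℝ) - 1 / (∏ i : Fin r, if (i : ℕ) < r - 1 then (a i : ℝ) else 1)) ≤ (m : ℝ) →
        c * (m : ℝ) ^ (∏ i : Fin r, a i) *
            (n : ℝ) ^ ((∑ i : Fin r, (a i : ℝ)) - r * ∏ i : Fin r, (a i : ℝ)) ≤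
          (Nat.card {A : Fin r → Finset V // IsCompleteMultipartiteCopy G a A} : ℝ) :=
  Super.main_aux r hr a ha2
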